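/- Let G be a graph, B ∈ B(G), and let x ∈ Δ_n be a minimizer of x^T B x over Δ_n (i.e., x^T B x = 1/α(G)). Then every edge of the induced subgraph G[supp(x)] is a critical edge of G. -/
import Mathlib


open Finset Matrix

/-- The stability number: the maximum cardinality of a stable (independent) set. -/
noncomputable def alpha {V : Type*} [Fintype V] (G : SimpleGraph V) : ℕ :=
  sSup {k | ∃ S : Finset V, (∀ i ∈ S, ∀ j ∈ S, ¬ G.Adj i j) ∧ S.card = k}

section Aux

open scoped Classical

lemma alpha_bdd {V : Type*} [Fintype V] (G : SimpleGraph V) :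
    BddAbove {k | ∃ S : Finset V, (∀ i ∈ S, ∀ j ∈ S, ¬ G.Adj i j) ∧ S.card = k} := by
  refine ⟨Fintype.card V, fun k hk => ?_⟩
  obtain ⟨S, _, rfl⟩ := hk
  simpa using S.card_le_univ

lemma card_le_alpha {V : Type*} [Fintype V] (G : SimpleGraph V) (S : Finset V)
    (hS : ∀ i ∈ S, ∀ j ∈ S, ¬ G.Adj i j) : S.card ≤ alpha G :=
  le_csSup (alpha_bdd G) ⟨S, hS, rfl⟩

lemma exists_alpha {V : Type*} [Fintype V] (G : SimpleGraph V) :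
    ∃ S : Finset V, (∀ i ∈ S, ∀ j ∈ S, ¬ G.Adj i j) ∧ S.card = alpha G := by
  have hne : {k | ∃ S : Finset V, (∀ i ∈ S, ∀ j ∈ S, ¬ G.Adj i j) ∧ S.card = k}.Nonempty :=
    ⟨0, ∅, by simp, by simp⟩
  exact Nat.sSup_mem hne (alpha_bdd G)

variable {n : ℕ}

/-- Indicator of "distinct and non-adjacent" pairs. -/
noncomputable def cg (G : SimpleGraph (Fin n)) (p q : Fin n) : ℝ :=
  if p ≠ q ∧ ¬ G.Adj p q then 1 else 0

/-- The bilinear form `∑ cg p q * u p * v q`. -/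
noncomputable def qf (G : SimpleGraph (Fin n)) (u v : Fin n → ℝ) : ℝ :=
  ∑ p, ∑ q, cg G p q * (u p * v q)

lemma cg_symm (G : SimpleGraph (Fin n)) (p q : Fin n) : cg G p q = cg G q p := by
  unfold cg
  congr 1
  simp [and_congr, ne_comm, G.adj_comm]

lemma cg_self (G : SimpleGraph (Fin n)) (p : Fin n) : cg G p p = 0 := by
  simp [cg]

lemma cg_adj (G : SimpleGraph (Fin n)) {p q : Fin n} (h : G.Adj p q) : cg G p q = 0 := by
  simp [cg, h]

lemma qf_symm (G : SimpleGraph (Fin n)) (u v : Fin n → ℝ) : qf G u v = qf G v u := by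
  unfold qf
  rw [Finset.sum_comm]
  refine Finset.sum_congr rfl fun a _ => Finset.sum_congr rfl fun b _ => ?_
  rw [cg_symm]; ring

/-- The shift direction vector. -/
noncomputable def dvec (i j p : Fin n) : ℝ :=
  (if p = i then 1 else 0) - (if p = j then 1 else 0)

lemma sum_dvec {i j : Fin n} : ∑ p, dvec i j p = 0 := by
  simp [dvec, Finset.sum_sub_distrib]

lemma qf_dvec_left (G : SimpleGraph (Fin n)) (i j : Fin n) (y : Fin n → ℝ) :
    qf G (dvec i j) y = (∑ q, cg G i q * y q) - ∑ q, cg G j q * y q := by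
  unfold qf dvec
  have h : ∀ p q : Fin n,
      cg G p q * ((((if p = i then (1:ℝ) else 0) - if p = j then 1 else 0)) * y q)
      = (if p = i then cg G p q * y q else 0) - (if p = j then cg G p q * y q else 0) := by
    intro p q; split_ifs <;> ring
  rw [Finset.sum_comm]
  simp only [h, Finset.sum_sub_distrib, Finset.sum_ite_eq', Finset.mem_univ, if_true]

lemma sum_cg_dvec (G : SimpleGraph (Fin n)) (p i j : Fin n) :
    ∑ q, cg G p q * dvec i j q = cg G p i - cg G p j := by
  have h : ∀ q : Fin n, cg G p q * dvec i j q
      = (if q = i then cg G p q else 0) - (if q = j then cg G p q else 0) := by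
    intro q; unfold dvec; split_ifs <;> ring
  simp only [h, Finset.sum_sub_distrib, Finset.sum_ite_eq', Finset.mem_univ, if_true]

lemma qf_dvec_dvec (G : SimpleGraph (Fin n)) {i j : Fin n} (h : G.Adj i j) :
    qf G (dvec i j) (dvec i j) = 0 := by
  rw [qf_dvec_left]
  simp only [sum_cg_dvec]
  rw [cg_self, cg_self, cg_adj G h, cg_adj G h.symm]
  ring

lemma qf_dvec_swap (G : SimpleGraph (Fin n)) (i j : Fin n) (y : Fin n → ℝ) :
    qf G (dvec j i) y = - qf G (dvec i j) y := by
  have h : ∀ p : Fin n, dvec j i p = -dvec i j p := by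
    intro p; unfold dvec; ring
  unfold qf
  rw [← Finset.sum_neg_distrib]
  refine Finset.sum_congr rfl fun a _ => ?_
  rw [← Finset.sum_neg_distrib]
  refine Finset.sum_congr rfl fun b _ => ?_
  rw [h]; ring

lemma qf_expand (G : SimpleGraph (Fin n)) (y d : Fin n → ℝ) (t : ℝ) :
    qf G (fun p => y p + t * d p) (fun p => y p + t * d p)
      = qf G y y + t * qf G d y + t * qf G y d + t ^ 2 * qf G d d := by
  unfold qf
  have h : ∀ p q : Fin n, cg G p q * ((y p + t * d p) * (y q + t * d q))
      = cg G p q * (y p * y q) + t * (cg G p q * (d p * y q))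
        + t * (cg G p q * (y p * d q)) + t ^ 2 * (cg G p q * (d p * d q)) := by
    intro p q; ring
  simp only [h, Finset.sum_add_distrib, ← Finset.mul_sum]

lemma qf_le (G : SimpleGraph (Fin n)) (y : Fin n → ℝ) (hy : y ∈ stdSimplex ℝ (Fin n)) :
    qf G y y ≤ 1 - ∑ p, (y p) ^ 2 := by
  have h1 : qf G y y ≤ ∑ p, ∑ q, (if p = q then 0 else y p * y q) := by
    refine Finset.sum_le_sum fun p _ => Finset.sum_le_sum fun q _ => ?_
    by_cases hpq : p = q
    · subst hpq; simp [cg]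
    · rw [if_neg hpq]
      unfold cg
      split_ifs
      · exact le_of_eq (one_mul _)
      · rw [zero_mul]; exact mul_nonneg (hy.1 p) (hy.1 q)
  have h2 : ∀ p q : Fin n, (if p = q then (0:ℝ) else y p * y q)
      = y p * y q - (if q = p then y p * y q else 0) := by
    intro p q
    by_cases h : p = q
    · subst h; simp
    · simp [h, Ne.symm h]
  have h3 : (∑ p, ∑ q, if p = q then (0:ℝ) else y p * y q) = 1 - ∑ p, (y p) ^ 2 := by
    simp only [h2, Finset.sum_sub_distrib, Finset.sum_ite_eq', Finset.mem_univ, if_true,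
      ← Finset.mul_sum, hy.2, mul_one]
    congr 1
    refine Finset.sum_congr rfl fun p _ => ?_
    ring
  linarith [h1, le_of_eq h3]

lemma shift (G : SimpleGraph (Fin n)) (y : Fin n → ℝ) (hy : y ∈ stdSimplex ℝ (Fin n))
    (i j : Fin n) (hadj : G.Adj i j) (hi : y i ≠ 0) (hj : y j ≠ 0)
    (hD : 0 ≤ qf G (dvec i j) y) :
    ∃ w : Fin n → ℝ, w ∈ stdSimplex ℝ (Fin n) ∧
      (univ.filter fun p => w p ≠ 0) ⊆ (univ.filter fun p => y p ≠ 0).erase j ∧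
      qf G y y ≤ qf G w w := by
  have hne : i ≠ j := hadj.ne
  have hjpos : 0 ≤ y j := hy.1 j
  have hdi : dvec i j i = 1 := by simp [dvec, hne]
  have hdj : dvec i j j = -1 := by simp [dvec, Ne.symm hne]
  have hdo : ∀ p, p ≠ i → p ≠ j → dvec i j p = 0 := fun p h1 h2 => by simp [dvec, h1, h2]
  set w : Fin n → ℝ := fun p => y p + y j * dvec i j p with hw
  have hwi : w i = y i + y j := by rw [hw]; simp only; rw [hdi]; ring
  have hwj : w j = 0 := by rw [hw]; simp only; rw [hdj]; ring
  have hwo : ∀ p, p ≠ i → p ≠ j → w p = y p := by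
    intro p h1 h2; rw [hw]; simp only; rw [hdo p h1 h2]; ring
  refine ⟨w, ⟨?_, ?_⟩, ?_, ?_⟩
  · intro p
    by_cases hpi : p = i
    · rw [hpi, hwi]
      have := hy.1 i
      linarith
    · by_cases hpj : p = j
      · rw [hpj, hwj]
      · rw [hwo p hpi hpj]
        exact hy.1 p
  · rw [hw]
    simp only [Finset.sum_add_distrib, ← Finset.mul_sum, sum_dvec, hy.2, mul_zero, add_zero]
  · intro p hp
    rw [Finset.mem_filter] at hp
    by_cases hpj : p = j
    · exact absurd (show w p = 0 by rw [hpj, hwj]) hp.2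
    · refine Finset.mem_erase.2 ⟨hpj, Finset.mem_filter.2 ⟨Finset.mem_univ _, ?_⟩⟩
      by_cases hpi : p = i
      · exact hpi ▸ hi
      · have h := hp.2
        rw [hwo p hpi hpj] at h
        exact h
  · rw [hw]
    rw [qf_expand, qf_symm G y (dvec i j), qf_dvec_dvec G hadj]
    nlinarith

lemma key_aux (G : SimpleGraph (Fin n)) :
    ∀ k (y : Fin n → ℝ), y ∈ stdSimplex ℝ (Fin n) →
      (univ.filter fun p => y p ≠ 0).card ≤ k →
      qf G y y ≤ 1 - 1 / (alpha G : ℝ) := by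
  intro k
  induction k with
  | zero =>
    intro y hy hc
    exfalso
    have h0 : ∀ p, y p = 0 := by
      intro p
      by_contra hp
      have hmem : p ∈ univ.filter fun p => y p ≠ 0 :=
        Finset.mem_filter.2 ⟨Finset.mem_univ _, hp⟩
      have := Finset.card_pos.2 ⟨p, hmem⟩
      omega
    have h1 := hy.2
    simp only [h0, Finset.sum_const_zero] at h1
    exact absurd h1 (by norm_num)
  | succ k ih =>
    intro y hy hc
    by_cases hind : ∀ p, y p ≠ 0 → ∀ q, y q ≠ 0 → ¬ G.Adj p q
    · -- support is independent: Cauchy–Schwarz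
      set s := univ.filter fun p => y p ≠ 0 with hs
      have hsum : ∑ p ∈ s, y p = 1 := by
        rw [← hy.2]
        exact Finset.sum_subset (Finset.subset_univ s) fun p _ hp => by simpa [hs] using hp
      have hnemp : s.Nonempty := by
        rcases Finset.eq_empty_or_nonempty s with h | h
        · rw [h] at hsum; simp at hsum
        · exact h
      have hcard_pos : 0 < s.card := Finset.card_pos.2 hnemp
      have hαs : s.card ≤ alpha G :=
        card_le_alpha G s fun p hp q hq =>
          hind p (Finset.mem_filter.1 hp).2 q (Finset.mem_filter.1 hq).2
      have hcs : (1:ℝ) ≤ (s.card : ℝ) * ∑ p ∈ s, (y p) ^ 2 := by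
        have h := sq_sum_le_card_mul_sum_sq (s := s) (f := y)
        rw [hsum] at h
        simpa using h
      have hsumsq : ∑ p ∈ s, (y p) ^ 2 ≤ ∑ p, (y p) ^ 2 :=
        Finset.sum_le_sum_of_subset_of_nonneg (Finset.subset_univ s) fun p _ _ => sq_nonneg _
      have hc0 : (0:ℝ) < (s.card : ℝ) := by exact_mod_cast hcard_pos
      have hα0 : (0:ℝ) < (alpha G : ℝ) := by
        have : 0 < alpha G := lt_of_lt_of_le hcard_pos hαs
        exact_mod_cast this
      have h5 : 1 / (alpha G : ℝ) ≤ ∑ p, (y p) ^ 2 := by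
        have ha : 1 / (alpha G : ℝ) ≤ 1 / (s.card : ℝ) :=
          one_div_le_one_div_of_le hc0 (by exact_mod_cast hαs)
        have hb : (1:ℝ) / (s.card : ℝ) ≤ ∑ p ∈ s, (y p) ^ 2 := by
          rw [div_le_iff₀ hc0, mul_comm]
          exact hcs
        linarith
      linarith [qf_le G y hy]
    · push_neg at hind
      obtain ⟨i, hi, j, hj, hadj⟩ := hind
      have hjmem : j ∈ univ.filter fun p => y p ≠ 0 :=
        Finset.mem_filter.2 ⟨Finset.mem_univ _, hj⟩
      have himem : i ∈ univ.filter fun p => y p ≠ 0 :=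
        Finset.mem_filter.2 ⟨Finset.mem_univ _, hi⟩
      by_cases hD : 0 ≤ qf G (dvec i j) y
      · obtain ⟨w, hw, hsub, hle⟩ := shift G y hy i j hadj hi hj hD
        refine le_trans hle (ih w hw ?_)
        have h1 := Finset.card_le_card hsub
        have h2 := Finset.card_erase_of_mem hjmem
        omega
      · have hD' : 0 ≤ qf G (dvec j i) y := by
          rw [qf_dvec_swap]
          linarith [lt_of_not_ge hD]
        obtain ⟨w, hw, hsub, hle⟩ := shift G y hy j i hadj.symm hj hi hD'
        refine le_trans hle (ih w hw ?_)
        have h1 := Finset.card_le_card hsub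
        have h2 := Finset.card_erase_of_mem himem
        omega

lemma lower_bound (H : SimpleGraph (Fin n)) (B : Matrix (Fin n) (Fin n) ℝ)
    (hdiag : ∀ i, B i i = 1) (hedge : ∀ i j, H.Adj i j → 1 ≤ B i j)
    (hnonedge : ∀ i j, i ≠ j → ¬ H.Adj i j → B i j = 0)
    (y : Fin n → ℝ) (hy : y ∈ stdSimplex ℝ (Fin n)) :
    1 / (alpha H : ℝ) ≤ y ⬝ᵥ (B *ᵥ y) := by
  have hqf := key_aux H _ y hy le_rfl
  have hexp : y ⬝ᵥ (B *ᵥ y) = ∑ p, ∑ q, y p * (B p q * y q) := by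
    simp [dotProduct, mulVec, Finset.mul_sum]
  have h1 : (∑ p, ∑ q, y p * y q) = 1 := by
    simp only [← Finset.mul_sum, hy.2, mul_one]
  have hterm : ∀ p q : Fin n, y p * y q - cg H p q * (y p * y q) ≤ y p * (B p q * y q) := by
    intro p q
    by_cases hpq : p = q
    · subst hpq
      rw [cg_self, hdiag]
      nlinarith [hy.1 p]
    · by_cases hadj : H.Adj p q
      · rw [cg_adj H hadj]
        have h := hedge p q hadj
        nlinarith [mul_nonneg (sub_nonneg.2 h) (mul_nonneg (hy.1 p) (hy.1 q))]
      · have hc : cg H p q = 1 := by simp [cg, hpq, hadj]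
        rw [hc, hnonedge p q hpq hadj]
        nlinarith
  have h2 : 1 - qf H y y ≤ y ⬝ᵥ (B *ᵥ y) := by
    rw [hexp, ← h1]
    unfold qf
    rw [← Finset.sum_sub_distrib]
    refine Finset.sum_le_sum fun p _ => ?_
    rw [← Finset.sum_sub_distrib]
    exact Finset.sum_le_sum fun q _ => hterm p q
  linarith

end Aux

/-- If `x ∈ Δ_n` is a minimizer of `xᵀBx` for some `B ∈ B(G)`, then every edge of the
subgraph induced on the support of `x` is a critical edge of `G`. -/
theorem minimizer_support_edges_critical {n : ℕ} (G : SimpleGraph (Fin n))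
    (B : Matrix (Fin n) (Fin n) ℝ) (hsymm : B.IsSymm)
    (hdiag : ∀ i, B i i = 1)
    (hedge : ∀ i j, G.Adj i j → 1 ≤ B i j)
    (hnonedge : ∀ i j, i ≠ j → ¬ G.Adj i j → B i j = 0)
    (x : Fin n → ℝ) (hx : x ∈ stdSimplex ℝ (Fin n))
    (hmin : x ⬝ᵥ (B *ᵥ x) = 1 / (alpha G : ℝ)) :
    ∀ i j, 0 < x i → 0 < x j → G.Adj i j →
      alpha (G.deleteEdges {s(i, j)}) = alpha G + 1 := by
  intro i j hxi hxj hadj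
  classical
  set G' := G.deleteEdges {s(i, j)} with hG'
  have hne : i ≠ j := hadj.ne
  have hmono : alpha G ≤ alpha G' := by
    obtain ⟨S, hS, hcard⟩ := exists_alpha G
    rw [← hcard]
    refine card_le_alpha G' S fun a ha b hb hab => ?_
    exact hS a ha b hb ((SimpleGraph.deleteEdges_adj.1 hab).1)
  have hup : alpha G' ≤ alpha G + 1 := by
    obtain ⟨S, hS, hcard⟩ := exists_alpha G'
    have h2 : (S.erase i).card ≤ alpha G := by
      refine card_le_alpha G _ fun a ha b hb hab => ?_
      have ha' := Finset.mem_of_mem_erase ha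
      have hb' := Finset.mem_of_mem_erase hb
      have hnadj : ¬ G'.Adj a b := hS a ha' b hb'
      rw [hG', SimpleGraph.deleteEdges_adj] at hnadj
      have hmem : s(a, b) = s(i, j) := by
        by_contra hcon
        exact hnadj ⟨hab, by simpa using hcon⟩
      rw [Sym2.eq_iff] at hmem
      rcases hmem with ⟨h1, _⟩ | ⟨_, h2'⟩
      · exact (Finset.ne_of_mem_erase ha) h1
      · exact (Finset.ne_of_mem_erase hb) h2'
    by_cases hiS : i ∈ S
    · have := Finset.card_erase_of_mem hiS
      omega
    · rw [Finset.erase_eq_of_notMem hiS] at h2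
      omega
  by_contra hne2
  have heq : alpha G' = alpha G := by omega
  set B' : Matrix (Fin n) (Fin n) ℝ :=
    fun p q => if (p = i ∧ q = j) ∨ (p = j ∧ q = i) then 0 else B p q with hB'
  have hcond : ∀ p q : Fin n, ((p = i ∧ q = j) ∨ (p = j ∧ q = i)) → s(p, q) = s(i, j) := by
    rintro p q (⟨rfl, rfl⟩ | ⟨rfl, rfl⟩)
    · rfl
    · exact Sym2.eq_swap
  have hdiag' : ∀ p, B' p p = 1 := by
    intro p
    rw [hB']
    simp only
    rw [if_neg, hdiag]
    rintro (⟨rfl, rfl⟩ | ⟨rfl, rfl⟩) <;> exact hne rfl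
  have hedge' : ∀ p q, G'.Adj p q → 1 ≤ B' p q := by
    intro p q hpq
    rw [hG', SimpleGraph.deleteEdges_adj] at hpq
    rw [hB']
    simp only
    rw [if_neg]
    · exact hedge p q hpq.1
    · intro h
      exact hpq.2 (by simpa using hcond p q h)
  have hnonedge' : ∀ p q, p ≠ q → ¬ G'.Adj p q → B' p q = 0 := by
    intro p q hpq hnadj
    rw [hB']
    simp only
    by_cases h : (p = i ∧ q = j) ∨ (p = j ∧ q = i)
    · rw [if_pos h]
    · rw [if_neg h]
      refine hnonedge p q hpq fun hG => ?_
      apply hnadj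
      rw [hG', SimpleGraph.deleteEdges_adj]
      refine ⟨hG, ?_⟩
      simp only [Set.mem_singleton_iff]
      intro hs
      rw [Sym2.eq_iff] at hs
      exact h hs
  have hlow := lower_bound G' B' hdiag' hedge' hnonedge' x hx
  have hd : ∀ M : Matrix (Fin n) (Fin n) ℝ, x ⬝ᵥ (M *ᵥ x) = ∑ p, ∑ q, x p * (M p q * x q) := by
    intro M
    simp [dotProduct, mulVec, Finset.mul_sum]
  have hBB' : ∀ p q, B' p q = B p q
      - ((if p = i ∧ q = j then B i j else 0) + (if p = j ∧ q = i then B j i else 0)) := by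
    intro p q
    simp only [hB']
    by_cases h1 : p = i ∧ q = j
    · obtain ⟨rfl, rfl⟩ := h1
      rw [if_pos (Or.inl ⟨rfl, rfl⟩), if_pos ⟨rfl, rfl⟩, if_neg (fun h => hne h.1)]
      ring
    · by_cases h2 : p = j ∧ q = i
      · obtain ⟨rfl, rfl⟩ := h2
        rw [if_pos (Or.inr ⟨rfl, rfl⟩), if_neg h1, if_pos ⟨rfl, rfl⟩]
        ring
      · rw [if_neg (by tauto), if_neg h1, if_neg h2]
        ring
  have e1 : ∀ (a b : Fin n) (c : ℝ),
      (∑ p, ∑ q, x p * ((if p = a ∧ q = b then c else 0) * x q)) = x a * (c * x b) := by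
    intro a b c
    have hterm : ∀ p q : Fin n, x p * ((if p = a ∧ q = b then c else 0) * x q)
        = if q = b then (if p = a then x a * (c * x b) else 0) else 0 := by
      intro p q
      by_cases hp : p = a <;> by_cases hq : q = b <;>
        simp [hp, hq] <;> ring
    simp only [hterm, Finset.sum_ite_eq', Finset.mem_univ, if_true]
  have hsplit : x ⬝ᵥ (B' *ᵥ x) = x ⬝ᵥ (B *ᵥ x) - (x i * (B i j * x j) + x j * (B j i * x i)) := by
    rw [hd B', hd B]
    have hterm2 : ∀ p q : Fin n, x p * (B' p q * x q)
        = x p * (B p q * x q) - x p * ((if p = i ∧ q = j then B i j else 0) * x q)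
          - x p * ((if p = j ∧ q = i then B j i else 0) * x q) := by
      intro p q; rw [hBB']; ring
    simp only [hterm2, Finset.sum_sub_distrib]
    rw [e1, e1]
    ring
  have hBji : B j i = B i j := hsymm.apply i j
  have h1B : 1 ≤ B i j := hedge i j hadj
  rw [hsplit, hmin, heq] at hlow
  nlinarith [mul_pos hxi hxj]
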